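/- arXiv:1807.11127 — 5 statements merged into one kernel-verified Lean document; each statement's English description precedes it below -/
import Mathlib

section
/- For the linear map f(z) = a z + b z̄ with a = (1 − iτ)/2 and b = (1 + iτ)/2, where τ is in the upper half-plane, the logarithm of the distortion satisfies log((|a| + |b|)/(|a| − |b|)) = d_H(i, τ), the hyperbolic distance in the upper half-plane from i to τ. -/
/-- Inverse hyperbolic cosine (for `x ≥ 1`). -/
noncomputable def arccosh (x : ℝ) : ℝ := Real.log (x + Real.sqrt (x ^ 2 - 1))

/-- Hyperbolic distance on the upper half-plane (curvature -1). -/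
noncomputable def dH (z w : ℂ) : ℝ :=
  arccosh (1 + ‖z - w‖ ^ 2 / (2 * z.im * w.im))

theorem log_distortion_eq_hyperbolic_distance (τ : ℂ) (hτ : 0 < τ.im)
    (a b : ℂ) (ha : a = (1 - Complex.I * τ) / 2) (hb : b = (1 + Complex.I * τ) / 2) :
    Real.log ((‖a‖ + ‖b‖) / (‖a‖ - ‖b‖)) =
      dH Complex.I τ := by
  set x := τ.re with hx
  set y := τ.im with hy
  set A := ‖a‖ with hA
  set B := ‖b‖ with hB
  have hA0 : 0 ≤ A := norm_nonneg a
  have hB0 : 0 ≤ B := norm_nonneg b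
  have hA2 : A ^ 2 = (x ^ 2 + (1 + y) ^ 2) / 4 := by
    rw [hA, Complex.sq_norm, Complex.normSq_apply, ha]
    simp [Complex.div_re, Complex.div_im, Complex.normSq_apply, Complex.sub_re,
      Complex.sub_im, Complex.mul_re, Complex.mul_im]
    ring
  have hB2 : B ^ 2 = (x ^ 2 + (1 - y) ^ 2) / 4 := by
    rw [hB, Complex.sq_norm, Complex.normSq_apply, hb]
    simp [Complex.div_re, Complex.div_im, Complex.normSq_apply, Complex.add_re,
      Complex.add_im, Complex.mul_re, Complex.mul_im]
    ring
  have hdiff : A ^ 2 - B ^ 2 = y := by rw [hA2, hB2]; ring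
  have hAB : B < A := by
    nlinarith [sq_nonneg (A - B), sq_nonneg (A + B)]
  have hApos : 0 < A := lt_of_le_of_lt hB0 hAB
  have hABpos : 0 < A + B := by linarith
  have hdist : ‖Complex.I - τ‖ ^ 2 = x ^ 2 + (1 - y) ^ 2 := by
    rw [Complex.sq_norm, Complex.normSq_apply]
    simp [Complex.sub_re, Complex.sub_im]
    ring
  rw [dH, arccosh, hdist]
  set X : ℝ := 1 + (x ^ 2 + (1 - y) ^ 2) / (2 * Complex.I.im * y) with hX
  have hXval : X = (A ^ 2 + B ^ 2) / y := by
    rw [hX, hA2, hB2]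
    simp only [Complex.I_im]
    field_simp
    ring
  have hsqrt : Real.sqrt (X ^ 2 - 1) = 2 * A * B / y := by
    have h1 : X ^ 2 - 1 = (2 * A * B / y) ^ 2 := by
      rw [hXval]
      field_simp
      nlinarith [hdiff]
    rw [h1]
    exact Real.sqrt_sq (by positivity)
  rw [hsqrt]
  congr 1
  rw [hXval]
  have hy0 : y ≠ 0 := ne_of_gt hτ
  rw [← hdiff]
  have hABne : A - B ≠ 0 := ne_of_gt (by linarith)
  have hne : A ^ 2 - B ^ 2 ≠ 0 := by rw [hdiff]; exact hy0
  field_simp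
  nlinarith [sq_nonneg A]
end

section
/- Let r > 0 satisfy 1/2 ≤ sinh(r) ≤ 1/√3. Then the hyperbolic area of the region D(i·cosh(r), sinh(r)) ∩ {z : 0 < Re z < 1/2} (the part of the Euclidean disk centered at i·cosh(r) of radius sinh(r) lying in the vertical strip) computed with density 1/y² equals cosh(r) · arctan(4 cosh(r) √(2cosh(2r) − 3) / (7 − 3cosh(2r))) − 2 arctan(√(2cosh(2r) − 3)), where the arctan branch is chosen so the expression is continuous and nonnegative. -/
open Real

set_option maxHeartbeats 1000000 in
private lemma aux_area (s c : ℝ) (hs0 : 0 < s) (hc0 : 0 < c) (hcs : c ^ 2 = s ^ 2 + 1)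
    (hs2l : (1:ℝ)/4 ≤ s ^ 2) (hs2u : s ^ 2 ≤ 1/3) :
    (2 : ℝ) * ∫ y in (c - Real.sqrt (s ^ 2 - 1 / 4))..(c + Real.sqrt (s ^ 2 - 1 / 4)),
      (∫ x in (0 : ℝ)..(Real.sqrt (s ^ 2 - (y - c) ^ 2) - 1 / 2), (1 / y ^ 2)) =
      2 * c * Real.arctan (4 * c * (2 * Real.sqrt (s ^ 2 - 1 / 4)) / (7 - 3 * (2 * s ^ 2 + 1))) -
        4 * Real.arctan (2 * Real.sqrt (s ^ 2 - 1 / 4)) := by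
  set d := Real.sqrt (s ^ 2 - 1 / 4) with hd_def
  have hd2 : d ^ 2 = s ^ 2 - 1/4 := Real.sq_sqrt (by linarith)
  have hd0 : 0 ≤ d := Real.sqrt_nonneg _
  have hds : d < s := by nlinarith
  have hdc : d < c := by nlinarith
  have hy10 : 0 < c - d := by linarith
  have hle : c - d ≤ c + d := by linarith
  -- the antiderivative's derivative
  have key : ∀ y ∈ Set.uIcc (c - d) (c + d),
      HasDerivAt (fun y => 1/(2*y) - Real.sqrt (s^2-(y-c)^2)/y - Real.arcsin ((y-c)/s)
        + c * Real.arcsin ((c*y-1)/(s*y)))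
        ((Real.sqrt (s^2-(y-c)^2) - 1/2) * (1/y^2)) y := by
    intro y hy
    rw [Set.uIcc_of_le hle] at hy
    obtain ⟨hyl, hyr⟩ := hy
    have hy0 : 0 < y := by linarith
    have hq4 : 1/4 ≤ s^2 - (y-c)^2 := by nlinarith
    have hq0 : 0 < s^2 - (y-c)^2 := by linarith
    set w := Real.sqrt (s^2 - (y-c)^2) with hw_def
    have hw2 : w^2 = s^2-(y-c)^2 := Real.sq_sqrt hq0.le
    have hw : 1/2 ≤ w := by nlinarith [Real.sqrt_nonneg (s^2-(y-c)^2), hw2]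
    have hw0 : 0 < w := by linarith
    have hA : HasDerivAt (fun y : ℝ => s^2 - (y-c)^2) (-(2*(y-c))) y := by
      have h := (((hasDerivAt_id y).sub_const c).pow 2).const_sub (s^2)
      refine h.congr_deriv ?_
      simp
    have hsqrt : HasDerivAt (fun y : ℝ => Real.sqrt (s^2-(y-c)^2)) (1/(2*w) * (-(2*(y-c)))) y :=
      (Real.hasDerivAt_sqrt (ne_of_gt hq0)).comp y hA
    have T1 : HasDerivAt (fun y : ℝ => 1/(2*y)) ((0 * (2*y) - 1 * 2)/(2*y)^2) y := by
      have h := (hasDerivAt_const y (1:ℝ)).div ((hasDerivAt_id y).const_mul 2)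
        (by positivity : (2:ℝ) * id y ≠ 0)
      exact h.congr_deriv (by simp)
    have T2 : HasDerivAt (fun y : ℝ => Real.sqrt (s^2-(y-c)^2)/y)
        (((1/(2*w) * (-(2*(y-c)))) * y - w * 1)/y^2) y :=
      hsqrt.div (hasDerivAt_id y) (ne_of_gt hy0)
    have habs : (y - c)^2 < s^2 := by nlinarith
    have hlt1 : (y-c)/s < 1 := by rw [div_lt_one hs0]; nlinarith
    have hlt2 : -1 < (y-c)/s := by rw [lt_div_iff₀ hs0]; nlinarith
    have hinner3 : HasDerivAt (fun y : ℝ => (y-c)/s) (1/s) y := by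
      have := ((hasDerivAt_id y).sub_const c).div_const s
      simpa using this
    have T3 : HasDerivAt (fun y : ℝ => Real.arcsin ((y-c)/s))
        (1 / Real.sqrt (1 - ((y-c)/s)^2) * (1/s)) y :=
      by have := (Real.hasDerivAt_arcsin (ne_of_gt hlt2) (ne_of_lt hlt1)).comp y hinner3; exact this
    have hsy : 0 < s * y := by positivity
    have hiden : (s*y)^2 - (c*y-1)^2 = s^2 - (y-c)^2 := by linear_combination (1-y^2)*hcs
    have hsq2 : (c*y-1)^2 < (s*y)^2 := by nlinarith
    have hu1 : (c*y-1)/(s*y) < 1 := by rw [div_lt_one hsy]; nlinarith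
    have hu2 : -1 < (c*y-1)/(s*y) := by rw [lt_div_iff₀ hsy]; nlinarith
    have hinner4 : HasDerivAt (fun y : ℝ => (c*y-1)/(s*y))
        ((c * (s*y) - (c*y-1) * s)/(s*y)^2) y := by
      have h := (((hasDerivAt_id y).const_mul c).sub_const 1).div ((hasDerivAt_id y).const_mul s)
        (by simpa using ne_of_gt hsy)
      simp only [id] at h
      refine h.congr_deriv ?_
      ring
    have T4 : HasDerivAt (fun y : ℝ => Real.arcsin ((c*y-1)/(s*y)))
        (1 / Real.sqrt (1 - ((c*y-1)/(s*y))^2) * ((c * (s*y) - (c*y-1) * s)/(s*y)^2)) y :=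
      by have := (Real.hasDerivAt_arcsin (ne_of_gt hu2) (ne_of_lt hu1)).comp y hinner4; exact this
    have hF := ((T1.sub T2).sub T3).add (T4.const_mul c)
    refine hF.congr_deriv ?_
    have e1 : Real.sqrt (1 - ((y-c)/s)^2) = w / s := by
      rw [show 1 - ((y-c)/s)^2 = (s^2-(y-c)^2)/s^2 by field_simp,
        Real.sqrt_div hq0.le, Real.sqrt_sq hs0.le]
    have e2 : Real.sqrt (1 - ((c*y-1)/(s*y))^2) = w / (s*y) := by
      rw [show 1 - ((c*y-1)/(s*y))^2 = (s^2-(y-c)^2)/(s*y)^2 by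
          rw [← hiden]; field_simp,
        Real.sqrt_div hq0.le, Real.sqrt_sq hsy.le]
    rw [e1, e2]
    field_simp
    ring
  -- integrability of the integrand
  have hcont : IntervalIntegrable (fun y => (Real.sqrt (s^2-(y-c)^2) - 1/2) * (1/y^2))
      MeasureTheory.volume (c - d) (c + d) := by
    apply ContinuousOn.intervalIntegrable
    apply ContinuousOn.mul
    · exact ((Real.continuous_sqrt.comp (by continuity)).sub continuous_const).continuousOn
    · apply ContinuousOn.div continuousOn_const
      · exact (continuous_pow 2).continuousOn
      · intro y hy
        rw [Set.uIcc_of_le hle] at hy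
        have : 0 < y := lt_of_lt_of_le hy10 hy.1
        positivity
  have hint := intervalIntegral.integral_eq_sub_of_hasDerivAt key hcont
  -- reduce the inner integral
  have lhs_eq : (∫ y in (c - d)..(c + d),
      ∫ x in (0:ℝ)..(Real.sqrt (s^2 - (y - c)^2) - 1/2), (1/y^2)) =
      ∫ y in (c - d)..(c + d), (Real.sqrt (s^2-(y-c)^2) - 1/2) * (1/y^2) := by
    apply intervalIntegral.integral_congr
    intro y _
    simp [intervalIntegral.integral_const, smul_eq_mul]
  rw [lhs_eq, hint]
  -- evaluate at the endpoints
  have sqrt14 : Real.sqrt (1/4 : ℝ) = 1/2 := by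
    rw [show (1/4:ℝ) = (1/2)^2 by norm_num, Real.sqrt_sq (by norm_num)]
  have hqtop : s^2 - ((c + d) - c)^2 = 1/4 := by rw [add_sub_cancel_left]; linarith
  have hqbot : s^2 - ((c - d) - c)^2 = 1/4 := by
    rw [show (c - d) - c = -d by ring, neg_sq]; linarith
  -- arcsin-to-arctan conversion at the endpoints
  have harc : ∀ y : ℝ, 0 < y → s^2 - (y-c)^2 = 1/4 →
      Real.arcsin ((c*y-1)/(s*y)) = Real.arctan (2*(c*y-1)) := by
    intro y hy hqe
    have hsy : 0 < s * y := by positivity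
    have hiden : (s*y)^2 - (c*y-1)^2 = s^2 - (y-c)^2 := by linear_combination (1-y^2)*hcs
    have hsq2 : (c*y-1)^2 < (s*y)^2 := by nlinarith
    have hmem : (c*y-1)/(s*y) ∈ Set.Ioo (-1:ℝ) 1 := by
      constructor
      · rw [lt_div_iff₀ hsy]; nlinarith
      · rw [div_lt_one hsy]; nlinarith
    have hyne : y ≠ 0 := hy.ne'
    have hsne : s ≠ 0 := hs0.ne'
    have h4 : (s*y)^2 - (c*y-1)^2 = 1/4 := by rw [hiden, hqe]
    have h14 : 1 - ((c*y-1)/(s*y))^2 = (1/(2*(s*y)))^2 := by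
      rw [show 1 - ((c*y-1)/(s*y))^2 = ((s*y)^2 - (c*y-1)^2)/(s*y)^2 by field_simp, h4]
      field_simp
      ring
    rw [Real.arcsin_eq_arctan hmem, h14, Real.sqrt_sq (by positivity)]
    congr 1
    field_simp
  have harcd : Real.arcsin (d/s) = Real.arctan (2*d) := by
    have hmem : d/s ∈ Set.Ioo (-1:ℝ) 1 := by
      constructor
      · have : 0 ≤ d/s := by positivity
        linarith
      · rw [div_lt_one hs0]; exact hds
    have hsne : s ≠ 0 := hs0.ne'
    have h4 : s^2 - d^2 = 1/4 := by linarith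
    have h14 : 1 - (d/s)^2 = (1/(2*s))^2 := by
      rw [show 1 - (d/s)^2 = (s^2 - d^2)/s^2 by field_simp, h4]
      field_simp
      ring
    rw [Real.arcsin_eq_arctan hmem, h14, Real.sqrt_sq (by positivity)]
    congr 1
    field_simp
  have htop := harc (c + d) (by linarith) hqtop
  have hbot := harc (c - d) hy10 hqbot
  -- the arctan difference identity
  have hab : (2*(c*(c+d)-1)) * (2*(c*(c-d)-1)) = 1 - 3*s^2 := by
    linear_combination (4*c^2-3)*hcs - 4*c^2*hd2
  have hdiff : Real.arctan (2*(c*(c+d)-1)) - Real.arctan (2*(c*(c-d)-1)) =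
      Real.arctan (4*c*(2*d)/(7-3*(2*s^2+1))) := by
    have hcond : (2*(c*(c+d)-1)) * (-(2*(c*(c-d)-1))) < 1 := by nlinarith [hab, hs2u]
    rw [sub_eq_add_neg, ← Real.arctan_neg, Real.arctan_add hcond]
    congr 1
    rw [show (2*(c*(c+d)-1)) + -(2*(c*(c-d)-1)) = 4*c*d by ring]
    rw [show 1 - (2*(c*(c+d)-1)) * (-(2*(c*(c-d)-1))) = 2 - 3*s^2 by linear_combination hab]
    have hden : (2:ℝ) - 3*s^2 ≠ 0 := by nlinarith
    rw [show 7-3*(2*s^2+1) = 2*(2-3*s^2) by ring, show 4*c*(2*d) = 2*(4*c*d) by ring,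
      mul_div_mul_left _ _ (two_ne_zero)]
  -- final assembly
  rw [hqtop, hqbot, sqrt14]
  rw [show ((c+d)-c)/s = d/s by ring, show ((c-d)-c)/s = -(d/s) by ring]
  rw [Real.arcsin_neg, harcd, htop, hbot]
  rw [show (1:ℝ)/(2*(c+d)) = 1/2/(c+d) from (div_div 1 2 (c+d)).symm,
    show (1:ℝ)/(2*(c-d)) = 1/2/(c-d) from (div_div 1 2 (c-d)).symm]
  linear_combination (2*c) * hdiff

theorem area_disk_minus_domain (r : ℝ) (hr : 0 < r)
    (h1 : 1 / 2 ≤ Real.sinh r) (h2 : Real.sinh r ≤ 1 / Real.sqrt 3) :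
    (2 : ℝ) * ∫ y in (Real.cosh r - Real.sqrt (Real.sinh r ^ 2 - 1 / 4))..(
        Real.cosh r + Real.sqrt (Real.sinh r ^ 2 - 1 / 4)),
      (∫ x in (0 : ℝ)..(Real.sqrt (Real.sinh r ^ 2 - (y - Real.cosh r) ^ 2) - 1 / 2),
        (1 / y ^ 2)) =
      2 * Real.cosh r *
          Real.arctan (4 * Real.cosh r * Real.sqrt (2 * Real.cosh (2 * r) - 3) /
            (7 - 3 * Real.cosh (2 * r))) -
        4 * Real.arctan (Real.sqrt (2 * Real.cosh (2 * r) - 3)) := by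
  have hs0 : (0:ℝ) < Real.sinh r := lt_of_lt_of_le (by norm_num) h1
  have hc1 : 1 ≤ Real.cosh r := Real.one_le_cosh r
  have hc0 : (0:ℝ) < Real.cosh r := lt_of_lt_of_le one_pos hc1
  have hcs : Real.cosh r ^ 2 = Real.sinh r ^ 2 + 1 := Real.cosh_sq r
  have hs2u : Real.sinh r ^ 2 ≤ 1 / 3 := by
    have := pow_le_pow_left₀ hs0.le h2 2
    rwa [div_pow, one_pow, Real.sq_sqrt (by norm_num : (0:ℝ) ≤ 3)] at this
  have hs2l : (1:ℝ)/4 ≤ Real.sinh r ^ 2 := by nlinarith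
  have hc2r : Real.cosh (2*r) = 2 * Real.sinh r ^ 2 + 1 := by
    rw [Real.cosh_two_mul]; linarith
  have hd2 : Real.sqrt (Real.sinh r ^ 2 - 1/4) ^ 2 = Real.sinh r ^ 2 - 1/4 :=
    Real.sq_sqrt (by linarith)
  have hsq : Real.sqrt (2 * Real.cosh (2*r) - 3) = 2 * Real.sqrt (Real.sinh r ^ 2 - 1/4) := by
    rw [hc2r, show 2*(2 * Real.sinh r ^ 2 + 1) - 3 = (2 * Real.sqrt (Real.sinh r ^ 2 - 1/4))^2 by
      linear_combination (-4)*hd2]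
    exact Real.sqrt_sq (by positivity)
  rw [hsq, hc2r]
  exact aux_area (Real.sinh r) (Real.cosh r) hs0 hc0 hcs hs2l hs2u
end

section
/- ∫₁^{√3} (3/(π K²))(K² + 1) log((K² + 1)/(2(K² − 1))) dK = 1; i.e., the extremal distortion density integrates to one. -/
open Real Set Filter MeasureTheory intervalIntegral
open scoped Topology

noncomputable def distF (K : ℝ) : ℝ :=
  3 / Real.pi * ((K - 1 / K) * (Real.log (K ^ 2 + 1) - Real.log 2 - Real.log (K ^ 2 - 1))
    + 4 * Real.arctan K)

noncomputable def distf (K : ℝ) : ℝ :=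
  3 / (Real.pi * K ^ 2) * (K ^ 2 + 1) * Real.log ((K ^ 2 + 1) / (2 * (K ^ 2 - 1)))

lemma one_lt_sqrt3 : (1 : ℝ) < Real.sqrt 3 := by
  have : Real.sqrt 1 < Real.sqrt 3 := Real.sqrt_lt_sqrt (by norm_num) (by norm_num)
  simpa using this

lemma distF_hasDerivAt {K : ℝ} (hK : K ∈ Ioo (1 : ℝ) (Real.sqrt 3)) :
    HasDerivAt distF (distf K) K := by
  have hK1 : (1 : ℝ) < K := hK.1
  have hK0 : K ≠ 0 := by positivity
  have hKp : (0 : ℝ) < K := by linarith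
  have hsq : (1 : ℝ) < K ^ 2 := by nlinarith
  have hm : K ^ 2 - 1 > 0 := by linarith
  have hp : K ^ 2 + 1 > 0 := by positivity
  have hpi : Real.pi ≠ 0 := Real.pi_ne_zero
  have h1 : HasDerivAt (fun x : ℝ => x - 1 / x) (1 + 1 / K ^ 2) K := by
    have := (hasDerivAt_id K).sub ((hasDerivAt_inv hK0))
    simpa [one_div, sub_neg_eq_add, Pi.sub_def] using this
  have h2 : HasDerivAt (fun x : ℝ => Real.log (x ^ 2 + 1))
      ((2 * K) / (K ^ 2 + 1)) K := by
    have := (((hasDerivAt_pow 2 K).add_const 1).log (by positivity))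
    simpa using this
  have h3 : HasDerivAt (fun x : ℝ => Real.log (x ^ 2 - 1))
      ((2 * K) / (K ^ 2 - 1)) K := by
    have := (((hasDerivAt_pow 2 K).sub_const 1).log (by positivity))
    simpa using this
  have hL : HasDerivAt
      (fun x : ℝ => Real.log (x ^ 2 + 1) - Real.log 2 - Real.log (x ^ 2 - 1))
      ((2 * K) / (K ^ 2 + 1) - (2 * K) / (K ^ 2 - 1)) K := by
    simpa [Pi.sub_def] using (h2.sub_const (Real.log 2)).sub h3
  have harc : HasDerivAt (fun x : ℝ => 4 * Real.arctan x) (4 * (1 / (1 + K ^ 2))) K :=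
    (Real.hasDerivAt_arctan K).const_mul 4
  have hmain := ((h1.mul hL).add harc).const_mul (3 / Real.pi)
  convert (show HasDerivAt distF _ K from hmain) using 1
  rw [distf, Real.log_div (by positivity) (by positivity),
    Real.log_mul (by norm_num) (by positivity)]
  field_simp
  ring

lemma distf_nonneg {K : ℝ} (hK : K ∈ Ioo (1 : ℝ) (Real.sqrt 3)) : 0 ≤ distf K := by
  have hK1 : (1 : ℝ) < K := hK.1
  have hm : K ^ 2 - 1 > 0 := by nlinarith
  have hK3 : K ^ 2 < 3 := by
    have h := hK.2
    nlinarith [Real.sq_sqrt (by norm_num : (3:ℝ) ≥ 0), Real.sqrt_nonneg 3]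
  have hlog : 0 ≤ Real.log ((K ^ 2 + 1) / (2 * (K ^ 2 - 1))) := by
    apply Real.log_nonneg
    rw [le_div_iff₀ (by linarith)]
    nlinarith
  have : 0 ≤ 3 / (Real.pi * K ^ 2) * (K ^ 2 + 1) := by positivity
  exact mul_nonneg this hlog

lemma tendsto_at_one : Tendsto distF (𝓝[>] (1 : ℝ)) (𝓝 3) := by
  have hx : Tendsto (fun K : ℝ => K ^ 2 - 1) (𝓝[>] 1) (𝓝[>] 0) := by
    apply tendsto_nhdsWithin_of_tendsto_nhds_of_eventually_within
    · have : Tendsto (fun K : ℝ => K ^ 2 - 1) (𝓝 1) (𝓝 ((1:ℝ) ^ 2 - 1)) := by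
        exact ((continuous_pow 2).sub continuous_const).tendsto 1
      simpa using this.mono_left nhdsWithin_le_nhds
    · filter_upwards [self_mem_nhdsWithin] with K (hK : 1 < K)
      simp only [mem_Ioi]
      nlinarith
  have hlogmul : Tendsto (fun y : ℝ => Real.log y * y) (𝓝[>] 0) (𝓝 0) := by
    have := tendsto_log_mul_rpow_nhdsGT_zero (r := 1) one_pos
    simpa using this
  have hhard : Tendsto (fun K : ℝ => Real.log (K ^ 2 - 1) * (K ^ 2 - 1)) (𝓝[>] 1) (𝓝 0) :=
    hlogmul.comp hx
  have hinv : Tendsto (fun K : ℝ => 1 / K) (𝓝[>] 1) (𝓝 1) := by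
    have : Tendsto (fun K : ℝ => 1 / K) (𝓝 1) (𝓝 (1 / 1)) :=
      (continuousAt_const.div continuousAt_id one_ne_zero).tendsto
    simpa using this.mono_left nhdsWithin_le_nhds
  have hhard2 : Tendsto (fun K : ℝ => (K - 1 / K) * Real.log (K ^ 2 - 1)) (𝓝[>] 1) (𝓝 0) := by
    have h := hhard.mul hinv
    rw [zero_mul] at h
    apply h.congr'
    filter_upwards [self_mem_nhdsWithin] with K (hK : 1 < K)
    have hK0 : K ≠ 0 := by positivity
    field_simp
  have heasy : Tendsto (fun K : ℝ => (K - 1 / K) * (Real.log (K ^ 2 + 1) - Real.log 2))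
      (𝓝[>] 1) (𝓝 0) := by
    have hc : ContinuousAt (fun K : ℝ => (K - 1 / K) * (Real.log (K ^ 2 + 1) - Real.log 2)) 1 := by
      apply ContinuousAt.mul
      · exact continuousAt_id.sub (continuousAt_const.div continuousAt_id one_ne_zero)
      · apply ContinuousAt.sub _ continuousAt_const
        exact (((continuous_pow 2).continuousAt).add continuousAt_const).log (by norm_num)
    have := hc.tendsto.mono_left (nhdsWithin_le_nhds (s := Ioi (1:ℝ)))
    simpa using this
  have harc : Tendsto (fun K : ℝ => 4 * Real.arctan K) (𝓝[>] 1) (𝓝 Real.pi) := by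
    have hc : ContinuousAt (fun K : ℝ => 4 * Real.arctan K) 1 :=
      continuousAt_const.mul Real.continuous_arctan.continuousAt
    have h2 := hc.tendsto.mono_left (nhdsWithin_le_nhds (s := Ioi (1:ℝ)))
    have : (4 : ℝ) * Real.arctan 1 = Real.pi := by rw [Real.arctan_one]; ring
    rwa [this] at h2
  have hsum : Tendsto (fun K : ℝ => (K - 1 / K) *
      (Real.log (K ^ 2 + 1) - Real.log 2 - Real.log (K ^ 2 - 1)) + 4 * Real.arctan K)
      (𝓝[>] 1) (𝓝 (0 - 0 + Real.pi)) := by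
    have hL := heasy.sub hhard2
    exact ((hL.add harc).congr (fun K => by ring))
  have := hsum.const_mul (3 / Real.pi)
  have hpi : Real.pi ≠ 0 := Real.pi_ne_zero
  have hval : 3 / Real.pi * (0 - 0 + Real.pi) = 3 := by field_simp; ring
  rw [hval] at this
  exact this

lemma arctan_sqrt_three : Real.arctan (Real.sqrt 3) = Real.pi / 3 :=
  Real.arctan_eq_of_tan_eq Real.tan_pi_div_three
    ⟨by linarith [Real.pi_pos], by linarith [Real.pi_pos]⟩

lemma distF_sqrt3 : distF (Real.sqrt 3) = 4 := by
  have h3 : Real.sqrt 3 ^ 2 = 3 := Real.sq_sqrt (by norm_num)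
  have hpi : Real.pi ≠ 0 := Real.pi_ne_zero
  rw [distF, h3, _root_.arctan_sqrt_three]
  have : Real.log (3 + 1) = Real.log 2 + Real.log (3 - 1) := by
    rw [show (3:ℝ) + 1 = 2 * (3 - 1) by norm_num, Real.log_mul (by norm_num) (by norm_num)]
  rw [this]
  field_simp
  ring

lemma tendsto_at_sqrt3 : Tendsto distF (𝓝[<] Real.sqrt 3) (𝓝 4) := by
  have h3 : Real.sqrt 3 ^ 2 = 3 := Real.sq_sqrt (by norm_num)
  have hc : ContinuousAt distF (Real.sqrt 3) := by
    apply ContinuousAt.mul continuousAt_const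
    apply ContinuousAt.add
    · apply ContinuousAt.mul
      · exact continuousAt_id.sub (continuousAt_const.div continuousAt_id
          (Real.sqrt_pos.mpr (by norm_num)).ne')
      · apply ContinuousAt.sub
        apply ContinuousAt.sub
        · exact (((continuous_pow 2).continuousAt).add continuousAt_const).log
            (by norm_num [h3])
        · exact continuousAt_const
        · exact (((continuous_pow 2).continuousAt).sub continuousAt_const).log
            (by norm_num [h3])
    · exact continuousAt_const.mul Real.continuous_arctan.continuousAt
  rw [← distF_sqrt3]
  exact hc.tendsto.mono_left nhdsWithin_le_nhds

lemma distF_one : distF 1 = 3 := by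
  have hpi : Real.pi ≠ 0 := Real.pi_ne_zero
  rw [distF]
  simp [Real.arctan_one]
  field_simp

lemma distF_contOn : ContinuousOn distF (Icc (1 : ℝ) (Real.sqrt 3)) := by
  intro x hx
  rcases eq_or_lt_of_le hx.1 with h1 | h1
  · -- x = 1
    rw [← h1]
    have h := tendsto_at_one
    rw [ContinuousWithinAt, distF_one]
    have : 𝓝[Icc (1:ℝ) (Real.sqrt 3)] 1 ≤ 𝓝[Ici (1:ℝ)] 1 :=
      nhdsWithin_mono _ Icc_subset_Ici_self
    apply Tendsto.mono_left _ this
    rw [show Ici (1:ℝ) = {1} ∪ Ioi 1 by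
      rw [← Ioi_insert]; simp, nhdsWithin_union, nhdsWithin_singleton]
    rw [tendsto_sup]
    constructor
    · rw [tendsto_pure_left]
      intro s hs
      rw [distF_one]
      exact mem_of_mem_nhds hs
    · exact h
  · -- x > 1
    have hx0 : x ≠ 0 := by positivity
    have hsq : (1:ℝ) < x ^ 2 := by nlinarith
    apply ContinuousAt.continuousWithinAt
    apply ContinuousAt.mul continuousAt_const
    apply ContinuousAt.add
    · apply ContinuousAt.mul
      · exact continuousAt_id.sub (continuousAt_const.div continuousAt_id hx0)
      · apply ContinuousAt.sub
        apply ContinuousAt.sub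
        · exact (((continuous_pow 2).continuousAt).add continuousAt_const).log (by simp only [Pi.add_apply]; positivity)
        · exact continuousAt_const
        · exact (((continuous_pow 2).continuousAt).sub continuousAt_const).log
            (by intro h; nlinarith [sub_eq_zero.mp h])
    · exact continuousAt_const.mul Real.continuous_arctan.continuousAt

theorem distortion_density_integrates_to_one :
    ∫ K in (1 : ℝ)..Real.sqrt 3,
        3 / (Real.pi * K ^ 2) * (K ^ 2 + 1) * Real.log ((K ^ 2 + 1) / (2 * (K ^ 2 - 1))) = 1 := by
  have hab : (1 : ℝ) < Real.sqrt 3 := one_lt_sqrt3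
  have hint : IntervalIntegrable distf volume 1 (Real.sqrt 3) := by
    apply intervalIntegrable_deriv_of_nonneg (g := distF)
    · rw [uIcc_of_le hab.le]; exact distF_contOn
    · intro x hx
      rw [min_eq_left hab.le, max_eq_right hab.le] at hx
      exact distF_hasDerivAt hx
    · intro x hx
      rw [min_eq_left hab.le, max_eq_right hab.le] at hx
      exact distf_nonneg hx
  have := integral_eq_sub_of_hasDerivAt_of_tendsto hab
    (fun x hx => distF_hasDerivAt hx) hint tendsto_at_one tendsto_at_sqrt3
  have heq : ∀ K : ℝ, distf K =
      3 / (Real.pi * K ^ 2) * (K ^ 2 + 1) * Real.log ((K ^ 2 + 1) / (2 * (K ^ 2 - 1))) :=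
    fun K => rfl
  calc ∫ K in (1 : ℝ)..Real.sqrt 3,
        3 / (Real.pi * K ^ 2) * (K ^ 2 + 1) * Real.log ((K ^ 2 + 1) / (2 * (K ^ 2 - 1)))
      = ∫ K in (1 : ℝ)..Real.sqrt 3, distf K := by simp_rw [heq]
    _ = 4 - 3 := this
    _ = 1 := by norm_num
end

section
/- The expected extremal distortion ∫₁^{√3} K · (3/(πK²))(K²+1) log((K²+1)/(2(K²−1))) dK equals (3/π)( (1/4)Li₂(1/9) − Li₂(1/3) + π²/8 + log 2 · (1 − log √3) ). -/
/-- The dilogarithm `Li₂(x) = ∑_{n ≥ 1} xⁿ / n²`. -/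
noncomputable def Li2 (x : ℝ) : ℝ := ∑' n : ℕ, x ^ (n + 1) / ((n : ℝ) + 1) ^ 2

open Real

lemma li2_summable {x : ℝ} (hx : |x| ≤ 1) :
    Summable (fun n : ℕ => x ^ (n + 1) / ((n : ℝ) + 1) ^ 2) := by
  apply Summable.of_norm
  have hs : Summable (fun n : ℕ => 1 / ((n : ℝ) + 1) ^ 2) := by
    have := (summable_nat_add_iff (f := fun n : ℕ => 1 / (n : ℝ) ^ 2) 1).2
      (Real.summable_one_div_nat_pow.2 one_lt_two)
    simpa using this
  apply hs.of_nonneg_of_le (fun n => norm_nonneg _)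
  intro n
  have h1 : (0:ℝ) < ((n : ℝ) + 1) ^ 2 := by positivity
  rw [norm_eq_abs, abs_div, abs_pow, abs_of_pos h1]
  gcongr
  exact pow_le_one₀ (abs_nonneg x) hx

lemma li2_hasSum {x : ℝ} (hx : |x| ≤ 1) :
    HasSum (fun n : ℕ => x ^ (n + 1) / ((n : ℝ) + 1) ^ 2) (Li2 x) :=
  (li2_summable hx).hasSum

lemma li2_one : Li2 1 = π ^ 2 / 6 := by
  have h := hasSum_zeta_two
  have h2 : HasSum (fun n : ℕ => (1:ℝ) / ((n:ℝ) + 1) ^ 2) (π ^ 2 / 6) := by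
    have h3 : HasSum (fun n : ℕ => (1:ℝ) / ((n : ℝ) ^ 2)) (π ^ 2 / 6 + ∑ i ∈ Finset.range 1, (1:ℝ) / (i:ℝ) ^ 2) := by
      simpa using h
    have := (hasSum_nat_add_iff (f := fun n : ℕ => (1:ℝ) / (n : ℝ) ^ 2) 1).2 h3
    simpa using this
  have := li2_hasSum (x := 1) (by norm_num)
  simp only [one_pow] at this
  exact this.unique h2

lemma aux_summable : Summable (fun n : ℕ => 1 / ((n : ℝ) + 1) ^ 2) := by
  have := (summable_nat_add_iff (f := fun n : ℕ => 1 / (n : ℝ) ^ 2) 1).2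
    (Real.summable_one_div_nat_pow.2 one_lt_two)
  simpa using this

lemma li2_continuousOn : ContinuousOn Li2 (Set.Icc (-1 : ℝ) 1) := by
  have : ContinuousOn (fun x : ℝ => ∑' n : ℕ, x ^ (n + 1) / ((n : ℝ) + 1) ^ 2)
      (Set.Icc (-1 : ℝ) 1) := by
    apply continuousOn_tsum (u := fun n : ℕ => 1 / ((n : ℝ) + 1) ^ 2)
      (fun i => ((continuous_pow (i + 1)).div_const _).continuousOn) aux_summable
    intro n x hx
    have hx1 : |x| ≤ 1 := abs_le.2 ⟨hx.1, hx.2⟩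
    have h1 : (0:ℝ) < ((n : ℝ) + 1) ^ 2 := by positivity
    rw [norm_eq_abs, abs_div, abs_pow, abs_of_pos h1]
    gcongr
    exact pow_le_one₀ (abs_nonneg x) hx1
  exact this

lemma li2_hasDerivAt {x : ℝ} (h0 : 0 < x) (h1 : x < 1) :
    HasDerivAt Li2 (-Real.log (1 - x) / x) x := by
  set r : ℝ := (1 + x) / 2 with hrdef
  have hr0 : 0 < r := by positivity
  have hr1 : r < 1 := by rw [hrdef]; linarith
  have hxr : x < r := by rw [hrdef]; linarith
  have key : HasDerivAt (fun z : ℝ => ∑' n : ℕ, z ^ (n + 1) / ((n : ℝ) + 1) ^ 2)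
      (∑' n : ℕ, x ^ n / ((n : ℝ) + 1)) x := by
    apply hasDerivAt_tsum_of_isPreconnected
      (u := fun n : ℕ => r ^ n) (g' := fun (n : ℕ) (y : ℝ) => y ^ n / ((n : ℝ) + 1))
      (summable_geometric_of_lt_one hr0.le hr1) (isOpen_Ioo (a := -r) (b := r))
      (convex_Ioo _ _).isPreconnected ?_ ?_ (y₀ := 0) ?_ ?_ ?_
    · intro n y _
      have hne : ((n : ℝ) + 1) ≠ 0 := by positivity
      have h := (hasDerivAt_pow (n + 1) y).div_const (((n : ℝ) + 1) ^ 2)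
      convert h using 1
      · rfl
      push_cast
      field_simp
    · intro n y hy
      have hyr : |y| ≤ r := le_of_lt (abs_lt.2 ⟨hy.1, hy.2⟩)
      have hle : |y| ^ n ≤ r ^ n := pow_le_pow_left₀ (abs_nonneg y) hyr n
      have h2 : (1:ℝ) ≤ (n : ℝ) + 1 := by
        have := Nat.cast_nonneg (α := ℝ) n; linarith
      rw [norm_eq_abs, abs_div, abs_pow, abs_of_pos (by positivity : (0:ℝ) < (n:ℝ) + 1)]
      calc |y| ^ n / ((n : ℝ) + 1) ≤ |y| ^ n / 1 := by
            gcongr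
        _ = |y| ^ n := div_one _
        _ ≤ r ^ n := hle
    · exact ⟨by linarith, hr0⟩
    · have : (fun n : ℕ => (0:ℝ) ^ (n + 1) / ((n : ℝ) + 1) ^ 2) = fun _ => (0:ℝ) := by
        funext n; simp
      rw [this]; exact summable_zero
    · exact ⟨by linarith, hxr⟩
  have hxabs : |x| < 1 := abs_lt.2 ⟨by linarith, h1⟩
  have hS0 := hasSum_pow_div_log_of_abs_lt_one hxabs
  have hS : HasSum (fun n : ℕ => x ^ n / ((n : ℝ) + 1)) (-Real.log (1 - x) / x) := by
    have := hS0.div_const x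
    convert this using 2 with n
    · rfl
    rw [pow_succ]
    field_simp
  have hLi : Li2 = fun z : ℝ => ∑' n : ℕ, z ^ (n + 1) / ((n : ℝ) + 1) ^ 2 := rfl
  rw [hLi]
  convert key using 1
  exact hS.tsum_eq.symm

noncomputable def Fa (K : ℝ) : ℝ :=
  (3 / π) * ((1 / 2) * ((K ^ 2 + 1) * Real.log (K ^ 2 + 1) - (K ^ 2 - 1) * Real.log (K ^ 2 - 1))
    - Real.log 2 / 2 * (K ^ 2 + 2 * Real.log K)
    + (1 / 4) * Li2 (((K ^ 2)⁻¹) ^ 2) - Li2 ((K ^ 2)⁻¹))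

lemma Fa_hasDerivAt {K : ℝ} (hK : 1 < K) :
    HasDerivAt Fa
      (K * (3 / (π * K ^ 2)) * (K ^ 2 + 1) *
        Real.log ((K ^ 2 + 1) / (2 * (K ^ 2 - 1)))) K := by
  have hK0 : (0:ℝ) < K := by linarith
  have hK2 : 1 < K ^ 2 := by nlinarith
  have h2 : (0:ℝ) < K ^ 2 - 1 := by linarith
  have h3 : (0:ℝ) < K ^ 2 + 1 := by linarith
  have hKsqne : (K ^ 2) ≠ 0 := by positivity
  have hy0 : (0:ℝ) < (K ^ 2)⁻¹ := by positivity
  have hy1 : (K ^ 2)⁻¹ < 1 := by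
    rw [inv_lt_one_iff₀]; right; exact hK2
  have hw0 : (0:ℝ) < ((K ^ 2)⁻¹) ^ 2 := by positivity
  have hw1 : ((K ^ 2)⁻¹) ^ 2 < 1 := pow_lt_one₀ hy0.le hy1 two_ne_zero
  have hKsq : HasDerivAt (fun K : ℝ => K ^ 2) (2 * K) K := by
    simpa using hasDerivAt_pow 2 K
  -- A
  have hp : HasDerivAt (fun K : ℝ => K ^ 2 + 1) (2 * K) K := hKsq.add_const 1
  have hm : HasDerivAt (fun K : ℝ => K ^ 2 - 1) (2 * K) K := hKsq.sub_const 1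
  have hA : HasDerivAt (fun K : ℝ => (K ^ 2 + 1) * Real.log (K ^ 2 + 1))
      (2 * K * Real.log (K ^ 2 + 1) + (K ^ 2 + 1) * (2 * K / (K ^ 2 + 1))) K :=
    hp.mul (hp.log (ne_of_gt h3))
  have hB : HasDerivAt (fun K : ℝ => (K ^ 2 - 1) * Real.log (K ^ 2 - 1))
      (2 * K * Real.log (K ^ 2 - 1) + (K ^ 2 - 1) * (2 * K / (K ^ 2 - 1))) K :=
    hm.mul (hm.log (ne_of_gt h2))
  have hC : HasDerivAt (fun K : ℝ => K ^ 2 + 2 * Real.log K) (2 * K + 2 * K⁻¹) K :=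
    hKsq.add ((Real.hasDerivAt_log (ne_of_gt hK0)).const_mul 2)
  have hinv : HasDerivAt (fun K : ℝ => (K ^ 2)⁻¹) (-(2 * K) / (K ^ 2) ^ 2) K := hKsq.inv hKsqne
  have hLi1 : HasDerivAt (fun K : ℝ => Li2 ((K ^ 2)⁻¹))
      ((-Real.log (1 - (K ^ 2)⁻¹) / (K ^ 2)⁻¹) * (-(2 * K) / (K ^ 2) ^ 2)) K :=
    HasDerivAt.comp (h₂ := Li2) K (li2_hasDerivAt hy0 hy1) hinv
  have hwD : HasDerivAt (fun K : ℝ => ((K ^ 2)⁻¹) ^ 2)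
      (2 * ((K ^ 2)⁻¹) ^ 1 * (-(2 * K) / (K ^ 2) ^ 2)) K := by
    exact (hinv.pow 2).congr_deriv (by ring)
  have hLi2 : HasDerivAt (fun K : ℝ => Li2 (((K ^ 2)⁻¹) ^ 2))
      ((-Real.log (1 - ((K ^ 2)⁻¹) ^ 2) / (((K ^ 2)⁻¹) ^ 2)) *
        (2 * ((K ^ 2)⁻¹) ^ 1 * (-(2 * K) / (K ^ 2) ^ 2))) K :=
    HasDerivAt.comp (h₂ := Li2) K (li2_hasDerivAt hw0 hw1) hwD
  have hF : HasDerivAt Fa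
      ((3 / π) * ((1 / 2) *
          ((2 * K * Real.log (K ^ 2 + 1) + (K ^ 2 + 1) * (2 * K / (K ^ 2 + 1))) -
           (2 * K * Real.log (K ^ 2 - 1) + (K ^ 2 - 1) * (2 * K / (K ^ 2 - 1))))
        - Real.log 2 / 2 * (2 * K + 2 * K⁻¹)
        + (1 / 4) * ((-Real.log (1 - ((K ^ 2)⁻¹) ^ 2) / (((K ^ 2)⁻¹) ^ 2)) *
            (2 * ((K ^ 2)⁻¹) ^ 1 * (-(2 * K) / (K ^ 2) ^ 2)))
        - (-Real.log (1 - (K ^ 2)⁻¹) / (K ^ 2)⁻¹) * (-(2 * K) / (K ^ 2) ^ 2))) K := by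
    exact ((((hA.sub hB).const_mul (1/2 : ℝ)).sub (hC.const_mul (Real.log 2 / 2))).add
      (hLi2.const_mul (1/4 : ℝ)) |>.sub hLi1).const_mul (3 / π)
  convert hF using 1
  -- now prove the two derivative expressions are equal
  have hlog1 : Real.log (1 - (K ^ 2)⁻¹) = Real.log (K ^ 2 - 1) - 2 * Real.log K := by
    have harg : 1 - (K ^ 2)⁻¹ = (K ^ 2 - 1) / K ^ 2 := by field_simp
    rw [harg, Real.log_div (ne_of_gt h2) hKsqne, Real.log_pow]
    push_cast; ring
  have hlog2 : Real.log (1 - ((K ^ 2)⁻¹) ^ 2) =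
      Real.log (K ^ 2 - 1) + Real.log (K ^ 2 + 1) - 4 * Real.log K := by
    have harg : 1 - ((K ^ 2)⁻¹) ^ 2 = ((K ^ 2 - 1) * (K ^ 2 + 1)) / (K ^ 2 * K ^ 2) := by
      field_simp; ring
    rw [harg, Real.log_div (by positivity) (by positivity),
      Real.log_mul (ne_of_gt h2) (ne_of_gt h3), Real.log_mul hKsqne hKsqne, Real.log_pow]
    push_cast; ring
  have hlog3 : Real.log ((K ^ 2 + 1) / (2 * (K ^ 2 - 1))) =
      Real.log (K ^ 2 + 1) - Real.log 2 - Real.log (K ^ 2 - 1) := by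
    rw [Real.log_div (ne_of_gt h3) (by positivity), Real.log_mul two_ne_zero (ne_of_gt h2)]
    ring
  rw [hlog1, hlog2, hlog3]
  have hπ : π ≠ 0 := Real.pi_ne_zero
  field_simp
  ring

lemma Fa_continuousOn : ContinuousOn Fa (Set.Icc (1:ℝ) (Real.sqrt 3)) := by
  have hmaps : ∀ x ∈ Set.Icc (1:ℝ) (Real.sqrt 3), (x ^ 2)⁻¹ ∈ Set.Icc (-1:ℝ) 1 := by
    intro x hx
    have hx1 : (1:ℝ) ≤ x := hx.1
    have h1 : (1:ℝ) ≤ x ^ 2 := by nlinarith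
    have h0 : (0:ℝ) < x ^ 2 := by nlinarith
    constructor
    · have : (0:ℝ) < (x ^ 2)⁻¹ := by positivity
      linarith
    · exact inv_le_one_of_one_le₀ h1
  have hxne : ∀ x ∈ Set.Icc (1:ℝ) (Real.sqrt 3), x ≠ 0 := fun x hx => by
    have : (1:ℝ) ≤ x := hx.1; linarith
  have hinvc : ContinuousOn (fun x : ℝ => (x ^ 2)⁻¹) (Set.Icc (1:ℝ) (Real.sqrt 3)) := by
    apply ContinuousOn.inv₀ (continuous_pow 2).continuousOn
    intro x hx
    have : (1:ℝ) ≤ x := hx.1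
    positivity
  have c1 : ContinuousOn (fun K : ℝ => (K ^ 2 + 1) * Real.log (K ^ 2 + 1))
      (Set.Icc (1:ℝ) (Real.sqrt 3)) := by
    apply ContinuousOn.mul ((continuous_pow 2).add continuous_const).continuousOn
    apply ContinuousOn.log ((continuous_pow 2).add continuous_const).continuousOn
    intro x _; show x ^ 2 + 1 ≠ 0; positivity
  have c2 : Continuous (fun K : ℝ => (K ^ 2 - 1) * Real.log (K ^ 2 - 1)) := by
    have := Real.continuous_mul_log.comp
      (f := fun K : ℝ => K ^ 2 - 1) ((continuous_pow 2).sub continuous_const)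
    exact this
  have c3 : ContinuousOn (fun K : ℝ => K ^ 2 + 2 * Real.log K)
      (Set.Icc (1:ℝ) (Real.sqrt 3)) := by
    apply ContinuousOn.add (continuous_pow 2).continuousOn
    exact (Real.continuousOn_log.mono (fun x hx => hxne x hx)).const_smul 2 |>.congr
      (fun x hx => by simp)
  have c4 : ContinuousOn (fun K : ℝ => Li2 ((K ^ 2)⁻¹)) (Set.Icc (1:ℝ) (Real.sqrt 3)) :=
    li2_continuousOn.comp hinvc hmaps
  have c5 : ContinuousOn (fun K : ℝ => Li2 (((K ^ 2)⁻¹) ^ 2))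
      (Set.Icc (1:ℝ) (Real.sqrt 3)) := by
    apply li2_continuousOn.comp (hinvc.pow 2)
    intro x hx
    have h := hmaps x hx
    have h1 : (0:ℝ) ≤ (x ^ 2)⁻¹ := by
      have : (1:ℝ) ≤ x := hx.1; positivity
    constructor
    · have : (0:ℝ) ≤ ((x ^ 2)⁻¹) ^ 2 := by positivity
      show (-1:ℝ) ≤ ((x ^ 2)⁻¹) ^ 2
      linarith
    · exact pow_le_one₀ h1 h.2
  unfold Fa
  apply ContinuousOn.mul continuousOn_const
  exact ((((c1.sub c2.continuousOn).const_smul (1/2:ℝ)).sub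
    (c3.const_smul (Real.log 2 / 2))).add (c5.const_smul (1/4:ℝ))).sub c4 |>.congr
    (fun x hx => rfl)

lemma sqrt3_gt_one : (1:ℝ) < Real.sqrt 3 := by
  rw [show (1:ℝ) = Real.sqrt 1 by simp]
  exact Real.sqrt_lt_sqrt (by norm_num) (by norm_num)

lemma sqrt3_lt_two : Real.sqrt 3 < 2 := by
  rw [Real.sqrt_lt' (by norm_num)]; norm_num

lemma log_intervalIntegrable {c : ℝ} (hc0 : 0 < c) (hc1 : c ≤ 1) :
    IntervalIntegrable Real.log MeasureTheory.volume 0 c := by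
  have hg : IntervalIntegrable (fun x : ℝ => 2 * x ^ (-(1/2) : ℝ))
      MeasureTheory.volume 0 c :=
    (intervalIntegral.intervalIntegrable_rpow' (by norm_num)).const_mul 2
  apply hg.mono_fun' Real.measurable_log.aestronglyMeasurable
  rw [Set.uIoc_of_le hc0.le]
  filter_upwards [MeasureTheory.ae_restrict_mem measurableSet_Ioc] with x hx
  obtain ⟨hx0, hxc⟩ := hx
  have hx1 : x ≤ 1 := hxc.trans hc1
  have hlogx : Real.log x ≤ 0 := Real.log_nonpos hx0.le hx1
  have hkey : Real.log (x ^ (-(1/2) : ℝ)) ≤ x ^ (-(1/2) : ℝ) - 1 :=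
    Real.log_le_sub_one_of_pos (Real.rpow_pos_of_pos hx0 _)
  rw [Real.log_rpow hx0] at hkey
  have hpos : (0:ℝ) ≤ x ^ (-(1/2) : ℝ) := (Real.rpow_pos_of_pos hx0 _).le
  simp only [norm_eq_abs, abs_of_nonpos hlogx]
  linarith

lemma log_sub_one_intervalIntegrable :
    IntervalIntegrable (fun x : ℝ => Real.log (x - 1)) MeasureTheory.volume 1 (Real.sqrt 3) := by
  have h := (log_intervalIntegrable (c := Real.sqrt 3 - 1)
    (by have := sqrt3_gt_one; linarith) (by have := sqrt3_lt_two; linarith)).comp_sub_right 1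
  simpa using h

lemma integrand_intervalIntegrable :
    IntervalIntegrable (fun K : ℝ => K * (3 / (π * K ^ 2)) * (K ^ 2 + 1) *
      Real.log ((K ^ 2 + 1) / (2 * (K ^ 2 - 1)))) MeasureTheory.volume 1 (Real.sqrt 3) := by
  have hle : (1:ℝ) ≤ Real.sqrt 3 := sqrt3_gt_one.le
  have huIcc : Set.uIcc (1:ℝ) (Real.sqrt 3) = Set.Icc 1 (Real.sqrt 3) := Set.uIcc_of_le hle
  have hpos : ∀ x ∈ Set.uIcc (1:ℝ) (Real.sqrt 3), (1:ℝ) ≤ x := by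
    intro x hx; rw [huIcc] at hx; exact hx.1
  -- integrable log part
  have h1 : ContinuousOn (fun K : ℝ => Real.log (K ^ 2 + 1) - Real.log 2 - Real.log (K + 1))
      (Set.uIcc (1:ℝ) (Real.sqrt 3)) := by
    apply ContinuousOn.sub
    apply ContinuousOn.sub
    · apply ContinuousOn.log ((continuous_pow 2).add continuous_const).continuousOn
      intro x _; show x ^ 2 + 1 ≠ 0; positivity
    · exact continuousOn_const
    · apply ContinuousOn.log (continuous_id.add continuous_const).continuousOn
      intro x hx; have := hpos x hx; show x + 1 ≠ 0; positivity
  have hl0 : IntervalIntegrable (fun K : ℝ =>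
      (Real.log (K ^ 2 + 1) - Real.log 2 - Real.log (K + 1)) - Real.log (K - 1))
      MeasureTheory.volume 1 (Real.sqrt 3) :=
    (h1.intervalIntegrable).sub log_sub_one_intervalIntegrable
  have hc : ContinuousOn (fun K : ℝ => K * (3 / (π * K ^ 2)) * (K ^ 2 + 1))
      (Set.uIcc (1:ℝ) (Real.sqrt 3)) := by
    apply ContinuousOn.mul
    apply ContinuousOn.mul continuousOn_id
    · apply ContinuousOn.div continuousOn_const
        (continuousOn_const.mul (continuous_pow 2).continuousOn)
      intro x hx
      have h1x := hpos x hx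
      have : π ≠ 0 := Real.pi_ne_zero
      show π * x ^ 2 ≠ 0
      positivity
    · exact ((continuous_pow 2).add continuous_const).continuousOn
  have hmul := hl0.continuousOn_mul hc
  apply hmul.congr
  intro x hx
  rw [Set.uIoc_of_le hle] at hx
  have hx1 : 1 < x := hx.1
  have h2 : (0:ℝ) < x ^ 2 - 1 := by nlinarith
  have h3 : (0:ℝ) < x ^ 2 + 1 := by nlinarith
  have hxm : (0:ℝ) < x - 1 := by linarith
  have hxp : (0:ℝ) < x + 1 := by linarith
  have hsplit : Real.log ((x ^ 2 + 1) / (2 * (x ^ 2 - 1))) =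
      Real.log (x ^ 2 + 1) - Real.log 2 - Real.log (x + 1) - Real.log (x - 1) := by
    rw [Real.log_div (ne_of_gt h3) (by positivity),
      Real.log_mul two_ne_zero (ne_of_gt h2),
      show x ^ 2 - 1 = (x + 1) * (x - 1) by ring,
      Real.log_mul (ne_of_gt hxp) (ne_of_gt hxm)]
    ring
  simp only [hsplit]

theorem expected_extremal_distortion :
    ∫ K in (1 : ℝ)..Real.sqrt 3,
        K * (3 / (Real.pi * K ^ 2)) * (K ^ 2 + 1) *
          Real.log ((K ^ 2 + 1) / (2 * (K ^ 2 - 1))) =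
      (3 / Real.pi) * ((1 / 4) * Li2 (1 / 9) - Li2 (1 / 3) + Real.pi ^ 2 / 8 +
        Real.log 2 * (1 - Real.log (Real.sqrt 3))) := by
  have hle : (1:ℝ) ≤ Real.sqrt 3 := sqrt3_gt_one.le
  have hFTC := intervalIntegral.integral_eq_sub_of_hasDeriv_right_of_le hle Fa_continuousOn
    (fun x hx => (Fa_hasDerivAt hx.1).hasDerivWithinAt) integrand_intervalIntegrable
  rw [hFTC]
  have hval3 : Fa (Real.sqrt 3) = (3/π) * ((1/2) * (4 * (2 * Real.log 2) - 2 * Real.log 2)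
      - Real.log 2 / 2 * (3 + 2 * Real.log (Real.sqrt 3))
      + (1/4) * Li2 (1/9) - Li2 (1/3)) := by
    unfold Fa
    rw [Real.sq_sqrt (by norm_num : (0:ℝ) ≤ 3)]
    have h4 : Real.log 4 = 2 * Real.log 2 := by
      rw [show (4:ℝ) = 2 ^ 2 by norm_num, Real.log_pow]; push_cast; ring
    norm_num [h4]
  have hval1 : Fa 1 = (3/π) * ((1/2) * (2 * Real.log 2) - Real.log 2 / 2
      + (1/4) * (π ^ 2 / 6) - π ^ 2 / 6) := by
    unfold Fa
    norm_num [li2_one, show (1:ℝ) + 1 = 2 by norm_num]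
  rw [hval3, hval1]
  ring
end

section
/- The Möbius transformations f(z) = (√(r²+1) z + 1)/(z + √(r²+1)) and g(z) = (√(s²+1) z + i)/(−i z + √(s²+1)), for r, s > 0, each map the unit disk onto itself; f fixes ±1 and g fixes ±i; and the trace of the commutator of their matrix representatives A = (1/r)[[√(r²+1), 1],[1, √(r²+1)]] and B = (1/s)[[√(s²+1), i],[−i, √(s²+1)]] equals −2 if and only if rs = 1. -/
open Matrix

lemma den_ne (a : ℝ) (ha : 1 < a) (z : ℂ) (hz : ‖z‖ < 1) : z + (a:ℂ) ≠ 0 := by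
  intro h
  have hz' : z = -(a:ℂ) := by linear_combination h
  rw [hz'] at hz
  rw [norm_neg, Complex.norm_real, Real.norm_eq_abs] at hz
  have := abs_lt.mp hz
  linarith [this.2]

lemma key (a : ℝ) (ha : 1 < a) (z : ℂ) (hz : ‖z‖ < 1) :
    ‖((a:ℂ) * z + 1) / (z + (a:ℂ))‖ < 1 := by
  have hden := den_ne a ha z hz
  rw [norm_div, div_lt_one (norm_pos_iff.mpr hden)]
  have h1 : z.re ^ 2 + z.im ^ 2 < 1 := by
    have := Complex.sq_norm z
    rw [Complex.normSq_apply] at this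
    nlinarith [norm_nonneg z]
  have hns : Complex.normSq ((a:ℂ) * z + 1) < Complex.normSq (z + (a:ℂ)) := by
    simp only [Complex.normSq_apply, Complex.add_re, Complex.add_im, Complex.mul_re,
      Complex.mul_im, Complex.ofReal_re, Complex.ofReal_im, Complex.one_re, Complex.one_im]
    have hp : (0:ℝ) < (a^2 - 1) * (1 - (z.re^2 + z.im^2)) :=
      mul_pos (by nlinarith) (by linarith)
    nlinarith [hp]
  have e1 := Complex.sq_norm ((a:ℂ) * z + 1)
  have e2 := Complex.sq_norm (z + (a:ℂ))
  nlinarith [norm_nonneg ((a:ℂ) * z + 1), norm_nonneg (z + (a:ℂ))]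

lemma img_f (a : ℝ) (ha : 1 < a) :
    (fun z : ℂ => ((a:ℂ) * z + 1) / (z + (a:ℂ))) '' {z : ℂ | ‖z‖ < 1}
      = {z : ℂ | ‖z‖ < 1} := by
  ext w
  constructor
  · rintro ⟨z, hz, rfl⟩
    exact key a ha z hz
  · intro hw
    simp only [Set.mem_setOf_eq] at hw
    set z : ℂ := ((a:ℂ) * w - 1) / (-w + (a:ℂ)) with hzdef
    have hzneg : z = -(((a:ℂ) * (-w) + 1) / ((-w) + (a:ℂ))) := by
      rw [hzdef, ← neg_div]
      ring_nf
    have hz : ‖z‖ < 1 := by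
      rw [hzneg, norm_neg]
      exact key a ha (-w) (by simpa using hw)
    refine ⟨z, hz, ?_⟩
    have hd1 : -w + (a:ℂ) ≠ 0 := den_ne a ha (-w) (by simpa using hw)
    have hd2 : z + (a:ℂ) ≠ 0 := den_ne a ha z hz
    show ((a:ℂ) * z + 1) / (z + (a:ℂ)) = w
    rw [div_eq_iff hd2, hzdef]
    field_simp
    ring

lemma img_g (b : ℝ) (hb : 1 < b) :
    (fun z : ℂ => ((b:ℂ) * z + Complex.I) / (-Complex.I * z + (b:ℂ))) ''
      {z : ℂ | ‖z‖ < 1} = {z : ℂ | ‖z‖ < 1} := by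
  have hIabs : ∀ u : ℂ, ‖Complex.I * u‖ = ‖u‖ := by
    intro u; rw [norm_mul, Complex.norm_I, one_mul]
  ext w
  constructor
  · rintro ⟨z, hz, rfl⟩
    simp only [Set.mem_setOf_eq] at hz ⊢
    have heq : ((b:ℂ) * z + Complex.I) / (-Complex.I * z + (b:ℂ))
        = Complex.I * (((b:ℂ) * (-Complex.I * z) + 1) / ((-Complex.I * z) + (b:ℂ))) := by
      rw [mul_div_assoc']
      congr 1
      linear_combination ((b:ℂ)*z) * Complex.I_sq
    rw [heq, hIabs]
    have habs : ‖-Complex.I * z‖ = ‖z‖ := by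
      rw [norm_mul, norm_neg, Complex.norm_I, one_mul]
    exact key b hb _ (habs ▸ hz)
  · intro hw
    simp only [Set.mem_setOf_eq] at hw
    set z : ℂ := ((b:ℂ) * w - Complex.I) / (Complex.I * w + (b:ℂ)) with hzdef
    have habsIw : ‖Complex.I * w‖ = ‖w‖ := hIabs w
    have hd1 : Complex.I * w + (b:ℂ) ≠ 0 := den_ne b hb _ (habsIw ▸ hw)
    have hzneg : z = -Complex.I * (((b:ℂ) * (Complex.I * w) + 1) / ((Complex.I * w) + (b:ℂ))) := by
      rw [hzdef, mul_div_assoc']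
      congr 1
      linear_combination ((b:ℂ)*w) * Complex.I_sq
    have hz : ‖z‖ < 1 := by
      rw [hzneg, norm_mul, norm_neg, Complex.norm_I, one_mul]
      exact key b hb _ (habsIw ▸ hw)
    refine ⟨z, hz, ?_⟩
    have hd2 : -Complex.I * z + (b:ℂ) ≠ 0 := by
      have h2 : -Complex.I * z = -(((b:ℂ) * (Complex.I * w) + 1) / ((Complex.I * w) + (b:ℂ))) := by
        rw [hzneg]
        linear_combination ((((b:ℂ) * (Complex.I * w) + 1) / ((Complex.I * w) + (b:ℂ)))) * Complex.I_sq
      rw [h2]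
      exact den_ne b hb _ (by rw [norm_neg]; exact key b hb _ (habsIw ▸ hw))
    show ((b:ℂ) * z + Complex.I) / (-Complex.I * z + (b:ℂ)) = w
    rw [div_eq_iff hd2, hzdef]
    have key2 : (Complex.I * w + (b:ℂ)) * (Complex.I * w + (b:ℂ))⁻¹ = 1 := mul_inv_cancel₀ hd1
    simp only [div_eq_mul_inv]
    linear_combination ((b:ℂ) * w - Complex.I) * key2

set_option maxHeartbeats 1000000 in
lemma trace_aux (r s : ℝ) (hr : 0 < r) (hs : 0 < s)
    (A B : Matrix (Fin 2) (Fin 2) ℂ)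
    (hA : A = (1 / (r : ℂ)) • !![(Real.sqrt (r ^ 2 + 1) : ℂ), 1; 1, (Real.sqrt (r ^ 2 + 1) : ℂ)])
    (hB : B = (1 / (s : ℂ)) •
        !![(Real.sqrt (s ^ 2 + 1) : ℂ), Complex.I; -Complex.I, (Real.sqrt (s ^ 2 + 1) : ℂ)]) :
    Matrix.trace (A * B * A⁻¹ * B⁻¹) = -2 ↔ r * s = 1 := by
  have hrc : (r:ℂ) ≠ 0 := by exact_mod_cast hr.ne'
  have hsc : (s:ℂ) ≠ 0 := by exact_mod_cast hs.ne'
  set a : ℂ := (Real.sqrt (r ^ 2 + 1) : ℂ) with hadef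
  set b : ℂ := (Real.sqrt (s ^ 2 + 1) : ℂ) with hbdef
  have ha2 : a ^ 2 = (r:ℂ) ^ 2 + 1 := by
    rw [hadef]
    rw [← Complex.ofReal_pow, Real.sq_sqrt (by positivity)]
    push_cast; ring
  have hb2 : b ^ 2 = (s:ℂ) ^ 2 + 1 := by
    rw [hbdef]
    rw [← Complex.ofReal_pow, Real.sq_sqrt (by positivity)]
    push_cast; ring
  have hAinv : A⁻¹ = (1 / (r : ℂ)) • !![a, -1; -1, a] := by
    apply inv_eq_right_inv
    rw [hA]
    ext i j
    fin_cases i <;> fin_cases j <;>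
      simp [Matrix.mul_apply, Fin.sum_univ_two, Matrix.one_apply] <;>
      field_simp <;> first | linear_combination ha2 | ring
  have hBinv : B⁻¹ = (1 / (s : ℂ)) • !![b, -Complex.I; Complex.I, b] := by
    apply inv_eq_right_inv
    rw [hB]
    ext i j
    fin_cases i <;> fin_cases j <;>
      simp [Matrix.mul_apply, Fin.sum_univ_two, Matrix.one_apply] <;>
      field_simp <;>
      first
        | linear_combination hb2 + Complex.I_sq
        | linear_combination hb2 - Complex.I_sq
        | linear_combination hb2
        | linear_combination Complex.I_sq
        | linear_combination -Complex.I_sq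
        | ring
  have htr0 : Matrix.trace (!![a, 1; 1, a] * !![b, Complex.I; -Complex.I, b] *
      !![a, -1; -1, a] * !![b, -Complex.I; Complex.I, b]) = 2*(r:ℂ)^2*(s:ℂ)^2 - 4 := by
    rw [Matrix.mul_fin_two, Matrix.mul_fin_two, Matrix.mul_fin_two, Matrix.trace_fin_two_of]
    linear_combination (2*Complex.I^2 + 2*b^2) * ha2 + 2*(r:ℂ)^2 * hb2 +
      (4 + 2*(r:ℂ)^2) * Complex.I_sq
  have htr : Matrix.trace (A * B * A⁻¹ * B⁻¹) = 2 - 4 / ((r:ℂ)^2 * (s:ℂ)^2) := by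
    rw [hAinv, hBinv, hA, hB]
    simp only [Matrix.smul_mul, Matrix.mul_smul, smul_smul, Matrix.trace_smul, smul_eq_mul]
    rw [htr0]
    field_simp
  rw [htr]
  constructor
  · intro h
    have h2 : (r:ℂ)^2 * (s:ℂ)^2 = 1 := by
      field_simp at h
      linear_combination h / 4
    have h3 : r ^ 2 * s ^ 2 = 1 := by exact_mod_cast h2
    have h4 : (r * s - 1) * (r * s + 1) = 0 := by nlinarith
    rcases mul_eq_zero.mp h4 with h5 | h5
    · linarith
    · nlinarith [mul_pos hr hs]
  · intro h
    have h2 : (r:ℂ)^2 * (s:ℂ)^2 = 1 := by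
      have : (r:ℂ) * (s:ℂ) = 1 := by exact_mod_cast h
      linear_combination ((r:ℂ)*(s:ℂ)+1) * this
    rw [h2]
    norm_num

lemma one_lt_sqrt_sq_add_one (r : ℝ) (hr : 0 < r) : 1 < Real.sqrt (r ^ 2 + 1) := by
  nlinarith [Real.sq_sqrt (show (0:ℝ) ≤ r^2+1 by positivity), Real.sqrt_nonneg (r^2+1)]

theorem rectangular_group_generators (r s : ℝ) (hr : 0 < r) (hs : 0 < s) :
    (fun z : ℂ => ((Real.sqrt (r ^ 2 + 1) : ℂ) * z + 1) /
          (z + (Real.sqrt (r ^ 2 + 1) : ℂ))) ''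
        {z : ℂ | ‖z‖ < 1} = {z : ℂ | ‖z‖ < 1} ∧
    (fun z : ℂ => ((Real.sqrt (s ^ 2 + 1) : ℂ) * z + Complex.I) /
          (-Complex.I * z + (Real.sqrt (s ^ 2 + 1) : ℂ))) ''
        {z : ℂ | ‖z‖ < 1} = {z : ℂ | ‖z‖ < 1} ∧
    ((Real.sqrt (r ^ 2 + 1) : ℂ) * 1 + 1) / (1 + (Real.sqrt (r ^ 2 + 1) : ℂ)) = 1 ∧
    ((Real.sqrt (r ^ 2 + 1) : ℂ) * (-1) + 1) / (-1 + (Real.sqrt (r ^ 2 + 1) : ℂ)) = -1 ∧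
    ((Real.sqrt (s ^ 2 + 1) : ℂ) * Complex.I + Complex.I) /
        (-Complex.I * Complex.I + (Real.sqrt (s ^ 2 + 1) : ℂ)) = Complex.I ∧
    ((Real.sqrt (s ^ 2 + 1) : ℂ) * (-Complex.I) + Complex.I) /
        (-Complex.I * (-Complex.I) + (Real.sqrt (s ^ 2 + 1) : ℂ)) = -Complex.I ∧
    (∀ A B : Matrix (Fin 2) (Fin 2) ℂ,
      A = (1 / (r : ℂ)) • !![(Real.sqrt (r ^ 2 + 1) : ℂ), 1; 1, (Real.sqrt (r ^ 2 + 1) : ℂ)] →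
      B = (1 / (s : ℂ)) •
          !![(Real.sqrt (s ^ 2 + 1) : ℂ), Complex.I; -Complex.I, (Real.sqrt (s ^ 2 + 1) : ℂ)] →
      (Matrix.trace (A * B * A⁻¹ * B⁻¹) = -2 ↔ r * s = 1)) := by
  have ha : 1 < Real.sqrt (r ^ 2 + 1) := one_lt_sqrt_sq_add_one r hr
  have hb : 1 < Real.sqrt (s ^ 2 + 1) := one_lt_sqrt_sq_add_one s hs
  set a : ℝ := Real.sqrt (r ^ 2 + 1)
  set b : ℝ := Real.sqrt (s ^ 2 + 1)
  refine ⟨img_f a ha, img_g b hb, ?_, ?_, ?_, ?_, fun A B hA hB => trace_aux r s hr hs A B hA hB⟩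
  · have h1 : (1:ℂ) + (a:ℂ) ≠ 0 := by
      have : ((1 + a : ℝ) : ℂ) ≠ 0 := by
        rw [Complex.ofReal_ne_zero]; linarith
      simpa using this
    rw [div_eq_one_iff_eq h1]; ring
  · have h1 : (-1:ℂ) + (a:ℂ) ≠ 0 := by
      have : ((-1 + a : ℝ) : ℂ) ≠ 0 := by
        rw [Complex.ofReal_ne_zero]; linarith
      simpa using this
    rw [div_eq_iff h1]; ring
  · have h1 : -Complex.I * Complex.I + (b:ℂ) ≠ 0 := by
      have h2 : -Complex.I * Complex.I + (b:ℂ) = ((1 + b : ℝ) : ℂ) := by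
        push_cast; linear_combination -Complex.I_sq
      rw [h2, Complex.ofReal_ne_zero]; linarith
    rw [div_eq_iff h1]; linear_combination Complex.I * Complex.I_sq
  · have h1 : -Complex.I * -Complex.I + (b:ℂ) ≠ 0 := by
      have h2 : -Complex.I * -Complex.I + (b:ℂ) = ((-1 + b : ℝ) : ℂ) := by
        push_cast; linear_combination Complex.I_sq
      rw [h2, Complex.ofReal_ne_zero]; linarith
    rw [div_eq_iff h1]; linear_combination Complex.I * Complex.I_sq
end
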